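/- (Uniform norm comparability of the mode penalties, used in Proposition 4.2's proof) Fix a mode d and suppose Assumption 4.1 holds for mode d: for every pair i < j in {1,…,n_d} there is a finite path i → k → ⋯ → l → j along which all weights w_{d,ik},…,w_{d,lj} are strictly positive. Then for every pair i < j there exists w > 0 (the minimum weight along such a path) such that for all u ∈ ℝ^n, w · ‖A_{d,ij} u‖₂ ≤ R_d(u), where R_d(u) = Σ_{i'<j'} w_{d,i'j'} ‖A_{d,i'j'} u‖₂. -/

import Mathlib

open scoped BigOperators
open Finset MeasureTheory

noncomputable section

/-- The full (vectorized) index set of a `D`-way tensor with mode sizes `n d`. -/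
abbrev TIdx {D : ℕ} (n : Fin D → ℕ) : Type := ∀ d, Fin (n d)

/-- The index set of a mode-`d` subarray: all modes except `d`. -/
abbrev RIdx {D : ℕ} (n : Fin D → ℕ) (d : Fin D) : Type :=
  ∀ d' : {x : Fin D // x ≠ d}, Fin (n d'.1)

/-- Insert the mode-`d` index `i` into the partial index `g`. -/
def insIdx {D : ℕ} (n : Fin D → ℕ) (d : Fin D) (g : RIdx n d) (i : Fin (n d)) : TIdx n :=
  fun d' => if h : d' = d then h.symm ▸ i else g ⟨d', h⟩

/-- The matrix `A_{d,ij} = I ⊗ ⋯ ⊗ (e_i - e_j)ᵀ ⊗ ⋯ ⊗ I`, realized on the canonical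
multi-index sets: applied to `u`, the `g`-th entry is `u(.., i, ..) - u(.., j, ..)`. -/
def Amat {D : ℕ} (n : Fin D → ℕ) (d : Fin D) (i j : Fin (n d)) :
    Matrix (RIdx n d) (TIdx n) ℝ :=
  Matrix.of fun g f =>
    (if f = insIdx n d g i then (1 : ℝ) else 0) - (if f = insIdx n d g j then (1 : ℝ) else 0)

/-- Euclidean (ℓ₂) norm of a finitely-indexed real vector. -/
def l2 {κ : Type*} [Fintype κ] (v : κ → ℝ) : ℝ := Real.sqrt (∑ a, v a ^ 2)

/-- The mode-`d` fusion penalty `R_d(u) = Σ_{i<j} w_{d,ij} ‖A_{d,ij} u‖₂`. -/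
def Rmode {D : ℕ} (n : Fin D → ℕ) (d : Fin D) (w : Fin (n d) → Fin (n d) → ℝ)
    (u : TIdx n → ℝ) : ℝ :=
  ∑ i, ∑ j, if i < j then w i j * l2 ((Amat n d i j).mulVec u) else 0

/-- The CoCo objective `F_γ(u) = (1/2)‖x - u‖₂² + γ Σ_d Σ_{i<j} w_{d,ij} ‖A_{d,ij} u‖₂`. -/
def coco {D : ℕ} (n : Fin D → ℕ) (x : TIdx n → ℝ) (γ : ℝ)
    (w : ∀ d, Fin (n d) → Fin (n d) → ℝ) (u : TIdx n → ℝ) : ℝ :=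
  (1 / 2) * ∑ f, (x f - u f) ^ 2 + γ * ∑ d, Rmode n d (w d) u

/-- Assumption 4.1 for mode `d`: any two mode-`d` indices are joined by a finite path each of
whose steps is a pair with strictly positive weight. -/
def ModeConnected {D : ℕ} (n : Fin D → ℕ) (d : Fin D)
    (w : Fin (n d) → Fin (n d) → ℝ) : Prop :=
  ∀ i j : Fin (n d),
    Relation.ReflTransGen (fun a b => (a < b ∧ 0 < w a b) ∨ (b < a ∧ 0 < w b a)) i j

lemma l2_nonneg' {κ : Type*} [Fintype κ] (v : κ → ℝ) : 0 ≤ l2 v := Real.sqrt_nonneg _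

lemma l2_eq_norm' {κ : Type*} [Fintype κ] (v : κ → ℝ) :
    l2 v = ‖(WithLp.toLp 2 v : EuclideanSpace ℝ κ)‖ := by
  rw [EuclideanSpace.norm_eq]
  simp [l2, sq_abs]

lemma l2_add_le' {κ : Type*} [Fintype κ] (v w : κ → ℝ) : l2 (v + w) ≤ l2 v + l2 w := by
  rw [l2_eq_norm', l2_eq_norm', l2_eq_norm']
  exact norm_add_le (WithLp.toLp 2 v : EuclideanSpace ℝ κ) (WithLp.toLp 2 w)

lemma l2_neg' {κ : Type*} [Fintype κ] (v : κ → ℝ) : l2 (-v) = l2 v := by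
  simp [l2]

lemma Amat_self {D : ℕ} (n : Fin D → ℕ) (d : Fin D) (i : Fin (n d)) :
    Amat n d i i = 0 := by
  ext g f; simp [Amat]

lemma Amat_swap {D : ℕ} (n : Fin D → ℕ) (d : Fin D) (i j : Fin (n d)) :
    Amat n d i j = - Amat n d j i := by
  ext g f; simp [Amat]

lemma Amat_split {D : ℕ} (n : Fin D → ℕ) (d : Fin D) (i k j : Fin (n d)) :
    Amat n d i j = Amat n d i k + Amat n d k j := by
  ext g f; simp [Amat]

lemma Rmode_nonneg' {D : ℕ} (n : Fin D → ℕ) (d : Fin D)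
    (w : Fin (n d) → Fin (n d) → ℝ) (hw : ∀ i j, 0 ≤ w i j) (u : TIdx n → ℝ) :
    0 ≤ Rmode n d w u := by
  refine Finset.sum_nonneg fun i _ => Finset.sum_nonneg fun j _ => ?_
  split
  · exact mul_nonneg (hw i j) (l2_nonneg' _)
  · exact le_refl 0

lemma term_le_Rmode {D : ℕ} (n : Fin D → ℕ) (d : Fin D)
    (w : Fin (n d) → Fin (n d) → ℝ) (hw : ∀ i j, 0 ≤ w i j)
    (a b : Fin (n d)) (hab : a < b) (u : TIdx n → ℝ) :
    w a b * l2 ((Amat n d a b).mulVec u) ≤ Rmode n d w u := by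
  have hterm : ∀ (i j : Fin (n d)),
      0 ≤ if i < j then w i j * l2 ((Amat n d i j).mulVec u) else 0 := by
    intro i j; split
    · exact mul_nonneg (hw i j) (l2_nonneg' _)
    · exact le_refl 0
  calc w a b * l2 ((Amat n d a b).mulVec u)
      = (if a < b then w a b * l2 ((Amat n d a b).mulVec u) else 0) := by rw [if_pos hab]
    _ ≤ ∑ j, if a < j then w a j * l2 ((Amat n d a j).mulVec u) else 0 :=
        Finset.single_le_sum (fun j _ => hterm a j) (Finset.mem_univ b)
    _ ≤ Rmode n d w u :=
        Finset.single_le_sum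
          (fun i _ => Finset.sum_nonneg fun j _ => hterm i j) (Finset.mem_univ a)

lemma edge_bound {D : ℕ} (n : Fin D → ℕ) (d : Fin D)
    (w : Fin (n d) → Fin (n d) → ℝ) (hw : ∀ i j, 0 ≤ w i j)
    (a b : Fin (n d))
    (h : (a < b ∧ 0 < w a b) ∨ (b < a ∧ 0 < w b a)) :
    ∃ c : ℝ, 0 < c ∧ ∀ u : TIdx n → ℝ,
      c * l2 ((Amat n d a b).mulVec u) ≤ Rmode n d w u := by
  rcases h with ⟨hlt, hpos⟩ | ⟨hlt, hpos⟩
  · exact ⟨w a b, hpos, fun u => term_le_Rmode n d w hw a b hlt u⟩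
  · refine ⟨w b a, hpos, fun u => ?_⟩
    have : l2 ((Amat n d a b).mulVec u) = l2 ((Amat n d b a).mulVec u) := by
      rw [Amat_swap n d a b, Matrix.neg_mulVec, l2_neg']
    rw [this]
    exact term_le_Rmode n d w hw b a hlt u

lemma path_bound {D : ℕ} (n : Fin D → ℕ) (d : Fin D)
    (w : Fin (n d) → Fin (n d) → ℝ) (hw : ∀ i j, 0 ≤ w i j)
    (a b : Fin (n d))
    (h : Relation.ReflTransGen
      (fun a b => (a < b ∧ 0 < w a b) ∨ (b < a ∧ 0 < w b a)) a b) :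
    ∃ c : ℝ, 0 < c ∧ ∀ u : TIdx n → ℝ,
      c * l2 ((Amat n d a b).mulVec u) ≤ Rmode n d w u := by
  induction h with
  | refl =>
      refine ⟨1, one_pos, fun u => ?_⟩
      rw [Amat_self, Matrix.zero_mulVec]
      have : l2 (0 : RIdx n d → ℝ) = 0 := by simp [l2]
      rw [this, mul_zero]
      exact Rmode_nonneg' n d w hw u
  | @tail p q hap hpq ih =>
      obtain ⟨c₁, hc₁, hb₁⟩ := ih
      obtain ⟨c₂, hc₂, hb₂⟩ := edge_bound n d w hw p q hpq
      refine ⟨min c₁ c₂ / 2, by positivity, fun u => ?_⟩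
      have hsplit : l2 ((Amat n d a q).mulVec u)
          ≤ l2 ((Amat n d a p).mulVec u) + l2 ((Amat n d p q).mulVec u) := by
        rw [Amat_split n d a p q, Matrix.add_mulVec]
        exact l2_add_le' _ _
      have h1 : min c₁ c₂ * l2 ((Amat n d a p).mulVec u) ≤ Rmode n d w u :=
        le_trans (mul_le_mul_of_nonneg_right (min_le_left _ _) (l2_nonneg' _)) (hb₁ u)
      have h2 : min c₁ c₂ * l2 ((Amat n d p q).mulVec u) ≤ Rmode n d w u :=
        le_trans (mul_le_mul_of_nonneg_right (min_le_right _ _) (l2_nonneg' _)) (hb₂ u)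
      have hm : 0 ≤ min c₁ c₂ := le_min hc₁.le hc₂.le
      nlinarith [mul_le_mul_of_nonneg_left hsplit hm]

/-- **uniform norm comparability of the mode penalties.** Under Assumption 4.1
for mode `d`, for every pair `i < j` there exists a constant `c > 0` (the minimum weight along
a connecting path) such that `c·‖A_{d,ij} u‖₂ ≤ R_d(u)` for all `u ∈ ℝⁿ`. -/
theorem Rmode_dominates_each_pair
    {D : ℕ} (n : Fin D → ℕ) (d : Fin D)
    (w : Fin (n d) → Fin (n d) → ℝ) (hw : ∀ i j, 0 ≤ w i j)
    (hconn : ModeConnected n d w) :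
    ∀ i j : Fin (n d), i < j →
      ∃ c : ℝ, 0 < c ∧
        ∀ u : TIdx n → ℝ, c * l2 ((Amat n d i j).mulVec u) ≤ Rmode n d w u := by
  intro i j _
  exact path_bound n d w hw i j (hconn i j)
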